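/- The tournament embedding T_T does not preserve the probabilistic Schulze rule: there exist two profiles with equal tournament matrices whose probabilistic Schulze lotteries differ. -/

import Mathlib

/-!
Framework: candidates are `Fin m`.  A ballot is a strict linear order on the
candidates, represented by its (0-indexed) rank function, a bijection
`Fin m ≃ Fin m` sending each candidate to its position.  A profile is a finite
list of ballots (one per voter).  A lottery on the candidates is represented by
its probability mass function `Fin m → ℚ`, and a probabilistic social choice
function (PSCF) maps profiles to lotteries.
-/

/-- A ballot: each candidate is assigned a distinct (0-indexed) rank;
rank `0` is the most preferred position. -/
abbrev Ballot (m : ℕ) := Fin m ≃ Fin m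

/-- A profile is a finite list of ballots, one per voter. -/
abbrev Profile (m : ℕ) := List (Ballot m)

/-- `wt X a b` is the number of voters in `X` who strictly prefer `a` to `b`
(i.e. rank `a` above `b`). -/
def wt {m : ℕ} (X : Profile m) (a b : Fin m) : ℕ :=
  X.countP (fun x => decide (x a < x b))

/-- The uniform lottery over a finite set `W` of candidates
(probability `1/|W|` on members of `W`, probability `0` elsewhere). -/
def unif {m : ℕ} (W : Finset (Fin m)) : Fin m → ℚ :=
  fun c => if c ∈ W then ((W.card : ℚ))⁻¹ else 0

/-- The set of candidates attaining the maximum value of the score `s`. -/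
def argmaxSet {m : ℕ} {α : Type*} [LinearOrder α] (s : Fin m → α) : Finset (Fin m) :=
  Finset.univ.filter (fun c => ∀ d, s d ≤ s c)

/-- The set of candidates attaining the minimum value of the score `s`. -/
def argminSet {m : ℕ} {α : Type*} [LinearOrder α] (s : Fin m → α) : Finset (Fin m) :=
  Finset.univ.filter (fun c => ∀ d, s c ≤ s d)

/-- An embedding `T` preserves a PSCF `f` if there exists `f'` with
`f' (T X) = f X` for all profiles `X`. -/
def Preserves {m : ℕ} {X' : Type*} (T : Profile m → X') (f : Profile m → Fin m → ℚ) : Prop :=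
  ∃ f' : X' → Fin m → ℚ, ∀ X : Profile m, f' (T X) = f X

/-- Weighted tournament embedding: `(T_WT X) j k = |{voters i : j ≻ᵢ k}|`. -/
def T_WT {m : ℕ} (X : Profile m) : Fin m → Fin m → ℕ :=
  fun a b => wt X a b

/-- Tournament embedding: entry `1` if a strict majority prefers `j` to `k`,
`0` if a strict majority prefers `k` to `j`, and `1/2` on ties. -/
def T_T {m : ℕ} (X : Profile m) : Fin m → Fin m → ℚ :=
  fun a b =>
    if wt X b a < wt X a b then 1
    else if wt X a b < wt X b a then 0
    else 1/2

/-- Rank frequency embedding: `(T_RF X) c k` is the number of voters ranking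
candidate `c` in position `k`. -/
def T_RF {m : ℕ} (X : Profile m) : Fin m → Fin m → ℕ :=
  fun c k => X.countP (fun x => decide (x c = k))

/-- Plurality score of `c`: the number of voters ranking `c` first. -/
def pluralityScore {m : ℕ} (X : Profile m) (c : Fin m) : ℕ :=
  X.countP (fun x => decide ((x c : ℕ) = 0))

/-- Probabilistic Plurality rule: the uniform lottery over the candidates with
maximum plurality score. -/
def plurality {m : ℕ} (X : Profile m) : Fin m → ℚ :=
  unif (argmaxSet (pluralityScore X))

/-- Borda score of `c`: `Σ_i (m − x_i(c))` where `x_i(c) ∈ {1,…,m}` is the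
(1-indexed) rank of `c` on voter `i`'s ballot. -/
def bordaScore {m : ℕ} (X : Profile m) (c : Fin m) : ℕ :=
  (X.map (fun x => m - ((x c : ℕ) + 1))).sum

/-- Probabilistic Borda rule: the uniform lottery over the candidates with
maximum Borda score. -/
def borda {m : ℕ} (X : Profile m) : Fin m → ℚ :=
  unif (argmaxSet (bordaScore X))

/-- Copeland score of `c`: `1` for every other candidate beaten by `c` in a
strict pairwise majority and `1/2` for every pairwise tie. -/
def copelandScore {m : ℕ} (X : Profile m) (c : Fin m) : ℚ :=
  ∑ b ∈ Finset.univ.filter (fun b => b ≠ c),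
    (if wt X b c < wt X c b then 1 else if wt X c b < wt X b c then 0 else 1/2)

/-- Probabilistic Copeland rule: the uniform lottery over the candidates with
maximum Copeland score. -/
def copeland {m : ℕ} (X : Profile m) : Fin m → ℚ :=
  unif (argmaxSet (copelandScore X))

/-- `max_{b ≠ c} d(b,c)`: the maximum weight of an incoming pairwise defeat. -/
def maxIncoming {m : ℕ} (X : Profile m) (c : Fin m) : ℕ :=
  (Finset.univ.filter (fun b => b ≠ c)).sup (fun b => wt X b c)

/-- Probabilistic Simpson-Kramer (Maximin) rule: the uniform lottery over the
candidates minimizing `max_{b ≠ c} d(b,c)`. -/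
def simpsonKramer {m : ℕ} (X : Profile m) : Fin m → ℚ :=
  unif (argminSet (maxIncoming X))

/-- `a` beats `b` by a strict pairwise majority in `X`. -/
def Beats {m : ℕ} (X : Profile m) (a b : Fin m) : Prop :=
  wt X b a < wt X a b

/-- `l` is (the vertex list of) a directed path from `a` to `b` in the majority
graph `G_X`: consecutive vertices are majority defeats. -/
def IsMajPath {m : ℕ} (X : Profile m) (a b : Fin m) (l : List (Fin m)) : Prop :=
  2 ≤ l.length ∧ l.head? = some a ∧ l.getLast? = some b ∧ l.Chain' (Beats X)

/-- Strength of a path: the minimum weight `d(u,v)` over its consecutive edges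
(the initial value `X.length` is an upper bound for all edge weights, so it does
not affect the minimum for an actual path). -/
def pathStrength {m : ℕ} (X : Profile m) (l : List (Fin m)) : ℕ :=
  ((l.zip l.tail).map (fun e => wt X e.1 e.2)).foldr min X.length

/-- Schulze strength `p(a,b)`: the maximum strength of a directed path from
`a` to `b` in `G_X`, and `0` if there is no such path. -/
noncomputable def schulzeP {m : ℕ} (X : Profile m) (a b : Fin m) : ℕ :=
  sSup {s | ∃ l, IsMajPath X a b l ∧ pathStrength X l = s}

open Classical in
/-- Schulze winners: `W(X) = {a : p(a,b) ≥ p(b,a) for all b}`. -/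
noncomputable def schulzeWinners {m : ℕ} (X : Profile m) : Finset (Fin m) :=
  Finset.univ.filter (fun a => ∀ b, schulzeP X b a ≤ schulzeP X a b)

/-- Probabilistic Schulze rule: the uniform lottery over the Schulze winners. -/
noncomputable def schulze {m : ℕ} (X : Profile m) : Fin m → ℚ :=
  unif (schulzeWinners X)

/-- Plurality score of `c` among the remaining candidates `S`: the number of
voters whose most preferred candidate within `S` is `c`. -/
def irvScore {m : ℕ} (X : Profile m) (S : Finset (Fin m)) (c : Fin m) : ℕ :=
  X.countP (fun x => decide (c ∈ S ∧ ∀ d ∈ S, x c ≤ x d))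

/-- One round of IRV: eliminate from `S` the candidate with the lowest
plurality score among `S`, breaking ties by the fixed (lexicographic) order on
`Fin m` (i.e. the least such candidate is eliminated). -/
def irvStep {m : ℕ} (X : Profile m) (S : Finset (Fin m)) : Finset (Fin m) :=
  S.filter (fun c => ¬ ((∀ d ∈ S, irvScore X S c ≤ irvScore X S d) ∧
    ∀ d ∈ S, (∀ e ∈ S, irvScore X S d ≤ irvScore X S e) → c ≤ d))

/-- The candidates surviving all `m - 1` IRV elimination rounds. -/
def irvWinners {m : ℕ} (X : Profile m) : Finset (Fin m) :=
  (irvStep X)^[m - 1] Finset.univ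

/-- Probabilistic IRV: all probability mass on the candidate never
eliminated. -/
def irv {m : ℕ} (X : Profile m) : Fin m → ℚ :=
  unif (irvWinners X)

/-- `c` is a Condorcet winner: it beats every other candidate by a strict
pairwise majority. -/
def IsCondorcetWinner {m : ℕ} (X : Profile m) (c : Fin m) : Prop :=
  ∀ b, b ≠ c → wt X b c < wt X c b

/-- Winners of Black's rule: the Condorcet winner if one exists, otherwise the
candidates with maximum Borda score. -/
def blackWinners {m : ℕ} (X : Profile m) : Finset (Fin m) :=
  let cw := Finset.univ.filter (fun c => ∀ b, b ≠ c → wt X b c < wt X c b)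
  if cw.Nonempty then cw else argmaxSet (bordaScore X)

/-- Probabilistic Black's rule. -/
def black {m : ℕ} (X : Profile m) : Fin m → ℚ :=
  unif (blackWinners X)

/-- Probabilistic positional scoring rule for a score vector `s` (indexed by
position): candidate `c` gets total score `Σ_i s (x_i c)`, and the rule returns
the uniform lottery over the candidates of maximum total score. -/
noncomputable def scoringRule {m : ℕ} (s : Fin m → ℝ) (X : Profile m) : Fin m → ℚ :=
  unif (argmaxSet (fun c => (X.map (fun x => s (x c))).sum))

instance {m : ℕ} (X : Profile m) (a b : Fin m) : Decidable (Beats X a b) :=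
  inferInstanceAs (Decidable (_ < _))

instance {m : ℕ} (X : Profile m) (a b : Fin m) (l : List (Fin m)) :
    Decidable (IsMajPath X a b l) :=
  inferInstanceAs (Decidable (_ ∧ _ ∧ _ ∧ List.IsChain (Beats X) l))

/-- Ballot `0 > 1 > 2`. -/
def blt012 : Ballot 3 := Equiv.refl _

/-- Ballot `1 > 2 > 0` (ranks: 0↦2, 1↦0, 2↦1). -/
def blt120 : Ballot 3 := ⟨![2,0,1], ![1,2,0], by decide, by decide⟩

/-- Ballot `2 > 0 > 1` (ranks: 0↦1, 1↦2, 2↦0). -/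
def blt201 : Ballot 3 := ⟨![1,2,0], ![2,0,1], by decide, by decide⟩

def Xprof : Profile 3 := [blt012, blt120, blt201]
def Yprof : Profile 3 := [blt012, blt012, blt120, blt201, blt201]

lemma foldr_min_le_init (l : List ℕ) (b : ℕ) : l.foldr min b ≤ b := by
  induction l with
  | nil => exact le_refl _
  | cons a l ih => exact le_trans (min_le_right _ _) ih

lemma pathStrength_le_len {m : ℕ} (X : Profile m) (l : List (Fin m)) :
    pathStrength X l ≤ X.length := foldr_min_le_init _ _

lemma strength_le_first {m : ℕ} (X : Profile m) (a b : Fin m) (l : List (Fin m))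
    (h : IsMajPath X a b l) : ∃ v, Beats X a v ∧ pathStrength X l ≤ wt X a v := by
  obtain ⟨hlen, hhead, hlast, hchain⟩ := h
  match l, hlen, hhead, hchain with
  | x :: y :: rest, _, hhead, hchain =>
    have hx : x = a := by simpa using hhead
    refine ⟨y, hx ▸ (List.isChain_cons_cons.1 hchain).1, ?_⟩
    rw [hx]
    exact min_le_left _ _

lemma schulzeP_le {m : ℕ} (X : Profile m) (a b : Fin m) (k : ℕ)
    (h : ∀ v, Beats X a v → wt X a v ≤ k) : schulzeP X a b ≤ k := by
  refine csSup_le' ?_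
  rintro s ⟨l, hl, rfl⟩
  obtain ⟨v, hv, hle⟩ := strength_le_first X a b l hl
  exact le_trans hle (h v hv)

lemma le_schulzeP {m : ℕ} (X : Profile m) (a b : Fin m) (l : List (Fin m))
    (hl : IsMajPath X a b l) : pathStrength X l ≤ schulzeP X a b := by
  refine le_csSup ⟨X.length, ?_⟩ ⟨l, hl, rfl⟩
  rintro s ⟨l', _, rfl⟩
  exact pathStrength_le_len X l'

lemma one_mem_WX : (1 : Fin 3) ∈ schulzeWinners Xprof := by
  rw [schulzeWinners, Finset.mem_filter]
  refine ⟨Finset.mem_univ _, fun b => ?_⟩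
  fin_cases b
  · -- p(0,1) ≤ 2 ≤ p(1,0)
    refine le_trans (schulzeP_le _ _ _ 2 (by decide)) ?_
    have h := le_schulzeP Xprof 1 0 [1,2,0] ⟨by decide, rfl, rfl, List.isChain_cons_cons.2 ⟨by decide, List.isChain_cons_cons.2 ⟨by decide, List.isChain_singleton _⟩⟩⟩
    have hs : pathStrength Xprof [1,2,0] = 2 := by decide
    rwa [hs] at h
  · exact le_refl _
  · -- p(2,1) ≤ 2 ≤ p(1,2)
    refine le_trans (schulzeP_le _ _ _ 2 (by decide)) ?_
    have h := le_schulzeP Xprof 1 2 [1,2] ⟨by decide, rfl, rfl, List.isChain_cons_cons.2 ⟨by decide, List.isChain_singleton _⟩⟩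
    have hs : pathStrength Xprof [1,2] = 2 := by decide
    rwa [hs] at h

lemma one_not_mem_WY : (1 : Fin 3) ∉ schulzeWinners Yprof := by
  rw [schulzeWinners, Finset.mem_filter]
  rintro ⟨-, h⟩
  have h0 := h 0
  -- p(0,1) ≥ 4 but p(1,0) ≤ 3
  have h1 : schulzeP Yprof 1 0 ≤ 3 := schulzeP_le _ _ _ 3 (by decide)
  have h2 : (4 : ℕ) ≤ schulzeP Yprof 0 1 := by
    have h := le_schulzeP Yprof 0 1 [0,1] ⟨by decide, rfl, rfl, List.isChain_cons_cons.2 ⟨by decide, List.isChain_singleton _⟩⟩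
    have hs : pathStrength Yprof [0,1] = 4 := by decide
    rwa [hs] at h
  omega

lemma schulze_ne : schulze Xprof ≠ schulze Yprof := by
  intro h
  have h1 := congrFun h 1
  rw [schulze, schulze, unif, unif] at h1
  simp only [one_mem_WX, if_pos, one_not_mem_WY, if_neg, not_false_iff] at h1
  have hc : (schulzeWinners Xprof).card ≠ 0 :=
    Finset.card_ne_zero_of_mem one_mem_WX
  exact (inv_ne_zero (by exact_mod_cast hc)) h1

/-- The tournament embedding does not preserve the probabilistic
Schulze rule: there exist two profiles with equal tournament matrices whose
probabilistic Schulze lotteries differ. -/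

theorem tt_not_preserves_schulze :
    ∃ m : ℕ, ¬ Preserves (T_T (m := m)) schulze ∧
      ∃ X Y : Profile m, T_T X = T_T Y ∧ schulze X ≠ schulze Y := by
  have hTT : T_T Xprof = T_T Yprof := by
    funext a b
    fin_cases a <;> fin_cases b <;> rfl
  refine ⟨3, ?_, Xprof, Yprof, hTT, schulze_ne⟩
  rintro ⟨f', hf'⟩
  exact schulze_ne ((hf' Xprof).symm.trans (hTT ▸ hf' Yprof))
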